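/- For all positive integers s, F_2(s) \le T(s): given any 2-coloring of the edges of the complete graph on {1,...,s} with colors I and II, the number of triples a<b<c with (a,b),(b,c) colored I and (a,c) colored II is at most the maximum number of cyclic triangles in a tournament on s vertices. -/

import Mathlib

/-- A tournament on `Fin n`: `r i j = true` means the edge is directed from `i` to `j`. -/
def IsTournament {n : ℕ} (r : Fin n → Fin n → Bool) : Prop :=
  (∀ i, r i i = false) ∧ ∀ i j : Fin n, i ≠ j → r i j = !r j i

open scoped Classical in
/-- The number of cyclic (directed) triangles of a tournament: the number of
3-element vertex sets whose three edges form a directed 3-cycle. -/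
noncomputable def cycCount {n : ℕ} (r : Fin n → Fin n → Bool) : ℕ :=
  (((Finset.univ : Finset (Fin n)).powersetCard 3).filter
    (fun t => ∃ a b c : Fin n, t = {a, b, c} ∧ r a b = true ∧ r b c = true ∧ r c a = true)).card

/-- The outdegree of vertex `i`. -/
def outdeg {n : ℕ} (r : Fin n → Fin n → Bool) (i : Fin n) : ℕ :=
  (Finset.univ.filter (fun j => r i j = true)).card


/-- `T(s)`: the maximum number of cyclic triangles over all tournaments on `s` vertices. -/
noncomputable def Tmax (s : ℕ) : ℕ :=
  sSup {c : ℕ | ∃ r : Fin s → Fin s → Bool, IsTournament r ∧ cycCount r = c}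

/-- Given a 2-coloring `col` of the edges of the complete graph on `Fin s`
(`false` = color I, `true` = color II), the number of triples `a < b < c` with
`(a,b)` and `(b,c)` of color I and `(a,c)` of color II. -/
def tripCount2 (s : ℕ) (col : Fin s → Fin s → Bool) : ℕ :=
  (Finset.univ.filter (fun t : Fin s × Fin s × Fin s =>
    t.1 < t.2.1 ∧ t.2.1 < t.2.2 ∧ col t.1 t.2.1 = false ∧ col t.2.1 t.2.2 = false ∧
      col t.1 t.2.2 = true)).card

/-- The tournament associated to a coloring: for `i < j`, direct `i → j` if the
edge has color I (`false`), else `j → i`. -/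
def colTour {n : ℕ} (col : Fin n → Fin n → Bool) (i j : Fin n) : Bool :=
  if i < j then !col i j else if j < i then col j i else false

lemma colTour_isTournament {n : ℕ} (col : Fin n → Fin n → Bool) :
    IsTournament (colTour col) := by
  constructor
  · intro i; simp [colTour]
  · intro i j hij
    rcases lt_or_gt_of_ne hij with h | h
    · simp [colTour, h, not_lt_of_gt h, h.not_gt]
    · simp [colTour, h, not_lt_of_gt h, h.not_gt]

lemma triple_eq {n : ℕ} {a b c a' b' c' : Fin n} (h1 : a < b) (h2 : b < c)
    (h1' : a' < b') (h2' : b' < c')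
    (h : ({a, b, c} : Finset (Fin n)) = {a', b', c'}) :
    a = a' ∧ b = b' ∧ c = c' := by
  have H := Finset.ext_iff.mp h
  simp only [Finset.mem_insert, Finset.mem_singleton] at H
  have Ha := (H a).mp (Or.inl rfl)
  have Hb := (H b).mp (Or.inr (Or.inl rfl))
  have Hc := (H c).mp (Or.inr (Or.inr rfl))
  simp only [Fin.ext_iff, Fin.lt_def] at *
  rcases Ha with h | h | h <;> rcases Hb with h' | h' | h' <;>
    rcases Hc with h'' | h'' | h'' <;> omega

open scoped Classical in
lemma tripCount2_le_cycCount (s : ℕ) (col : Fin s → Fin s → Bool) :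
    tripCount2 s col ≤ cycCount (colTour col) := by
  classical
  unfold tripCount2 cycCount
  apply Finset.card_le_card_of_injOn (fun t => ({t.1, t.2.1, t.2.2} : Finset (Fin s)))
  · rintro ⟨a, b, c⟩ ht
    simp only [Finset.mem_coe, Finset.mem_filter, Finset.mem_univ, true_and] at ht
    obtain ⟨hab, hbc, c1, c2, c3⟩ := ht
    simp only [Finset.mem_coe, Finset.mem_filter, Finset.mem_powersetCard]
    refine ⟨⟨Finset.subset_univ _, ?_⟩, a, b, c, rfl, ?_, ?_, ?_⟩
    · exact Finset.card_eq_three.mpr ⟨a, b, c, hab.ne, (hab.trans hbc).ne, hbc.ne, rfl⟩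
    · simp [colTour, hab, c1]
    · simp [colTour, hbc, c2]
    · have hac : a < c := hab.trans hbc
      simp [colTour, hac, not_lt_of_gt hac, c3]
  · rintro ⟨a, b, c⟩ ht ⟨a', b', c'⟩ ht' heq
    simp only [Finset.mem_coe, Finset.mem_filter, Finset.mem_univ, true_and] at ht ht'
    obtain ⟨h1, h2, h3⟩ := triple_eq ht.1 ht.2.1 ht'.1 ht'.2.1 heq
    simp [Prod.ext_iff, h1, h2, h3]

theorem F2_le_T (s : ℕ) (hs : 0 < s) (col : Fin s → Fin s → Bool) :
    tripCount2 s col ≤ Tmax s := by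
  have h1 := tripCount2_le_cycCount s col
  refine h1.trans (le_csSup ?_ ⟨colTour col, colTour_isTournament col, rfl⟩)
  refine ⟨((Finset.univ : Finset (Fin s)).powersetCard 3).card, ?_⟩
  rintro c ⟨r, _, rfl⟩
  exact Finset.card_filter_le _ _
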